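/- arXiv:1911.11719 — 5 statements merged into one kernel-verified Lean document; each statement's English description precedes it below -/
import Mathlib

section
/- Let $I = \{i_1 < \cdots < i_d\}$ and $J = \{j_1 < \cdots < j_d\}$ be $d$-element subsets of $\{1,\dots,n\}$. The set $X_{JI} = \{\pi \in S_d : \forall a,\ i_a \leq j_{\pi(a)}\}$ is downwards-closed in the Bruhat order on $S_d$: if $\pi \in X_{JI}$ and $\pi' \leq \pi$ in the Bruhat order, then $\pi' \in X_{JI}$. -/
/-- The number of inversions of a permutation of `Fin d`. -/
def inversions {d : ℕ} (π : Equiv.Perm (Fin d)) : ℕ :=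
  (Finset.univ.filter fun p : Fin d × Fin d => p.1 < p.2 ∧ π p.2 < π p.1).card

/-- `BruhatCov π' π` : `π` covers `π'` in the Bruhat order, i.e. `π' = π · (b a)` for some
transposition with `a < b`, `π b < π a`, and the number of inversions drops by one. -/
def BruhatCov {d : ℕ} (π' π : Equiv.Perm (Fin d)) : Prop :=
  (∃ a b : Fin d, a < b ∧ π b < π a ∧ π' = π * Equiv.swap a b) ∧
    inversions π = inversions π' + 1

/-- The Bruhat order on `Equiv.Perm (Fin d)`, generated by the covering relations. -/
def BruhatLE {d : ℕ} (π' π : Equiv.Perm (Fin d)) : Prop :=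
  Relation.ReflTransGen BruhatCov π' π

/-- The set `X_{JI}` of permutations `π` with `i_a ≤ j_{π(a)}` for all `a` is downwards closed
in the Bruhat order. -/
theorem bruhat_downward_closed (d n : ℕ) (i j : Fin d → ℕ)
    (hi : StrictMono i) (hj : StrictMono j)
    (hi' : ∀ a, i a ∈ Finset.Icc 1 n) (hj' : ∀ a, j a ∈ Finset.Icc 1 n)
    (π π' : Equiv.Perm (Fin d))
    (hπ : ∀ a, i a ≤ j (π a)) (h : BruhatLE π' π) :
    ∀ a, i a ≤ j (π' a) := by
  induction h using Relation.ReflTransGen.head_induction_on with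
  | refl => exact hπ
  | head hcov _ ih =>
    rename_i σ' σ _
    obtain ⟨⟨a, b, hab, hσ, heq⟩, -⟩ := hcov
    subst heq
    intro c
    simp only [Equiv.Perm.mul_apply]
    rcases eq_or_ne c a with rfl | hca
    · rw [Equiv.swap_apply_left]
      exact le_trans (hi.monotone hab.le) (ih b)
    rcases eq_or_ne c b with rfl | hcb
    · rw [Equiv.swap_apply_right]
      exact le_trans (ih c) (hj.monotone hσ.le)
    · rw [Equiv.swap_apply_of_ne_of_ne hca hcb]
      exact ih c
end

section
/- Let $I = \{i_1 < \cdots < i_d\}$ and $J = \{j_1 < \cdots < j_d\}$ be $d$-element subsets of $\{1,\dots,n\}$ with $i_a \leq j_a$ for all $a$. Then the set $X_{JI} = \{\pi \in S_d : \forall a,\ i_a \leq j_{\pi(a)}\}$ contains a maximum element with respect to the Bruhat order on $S_d$. -/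
lemma inversions_mul_swap {d : ℕ} (π : Equiv.Perm (Fin d)) (a b : Fin d) (hab : a < b)
    (hv : π a < π b)
    (hmid : ∀ c : Fin d, a < c → c < b → π c < π a ∨ π b < π c) :
    inversions (π * Equiv.swap a b) = inversions π + 1 := by
  classical
  have hne : a ≠ b := ne_of_lt hab
  set σ := π * Equiv.swap a b with hσdef
  have hσa : σ a = π b := by
    simp [hσdef, Equiv.Perm.mul_apply, Equiv.swap_apply_left]
  have hσb : σ b = π a := by
    simp [hσdef, Equiv.Perm.mul_apply, Equiv.swap_apply_right]
  have hσo : ∀ x : Fin d, x ≠ a → x ≠ b → σ x = π x := by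
    intro x h1 h2
    simp [hσdef, Equiv.Perm.mul_apply, Equiv.swap_apply_of_ne_of_ne h1 h2]
  set S := Finset.univ.filter (fun p : Fin d × Fin d => p.1 < p.2 ∧ π p.2 < π p.1) with hS
  set T := Finset.univ.filter (fun p : Fin d × Fin d => p.1 < p.2 ∧ σ p.2 < σ p.1) with hT
  have memS : ∀ p : Fin d × Fin d, p ∈ S ↔ p.1 < p.2 ∧ π p.2 < π p.1 := by
    intro p; simp [hS, Finset.mem_filter]
  have memT : ∀ p : Fin d × Fin d, p ∈ T ↔ p.1 < p.2 ∧ σ p.2 < σ p.1 := by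
    intro p; simp [hT, Finset.mem_filter]
  have habT : (a, b) ∈ T := (memT _).2 ⟨hab, by rw [hσa, hσb]; exact hv⟩
  set φ : Fin d × Fin d → Fin d × Fin d := fun p =>
    if (p.1 = a ∧ p.2 < b) ∨ (p.2 = b ∧ a < p.1) then p
    else (Equiv.swap a b p.1, Equiv.swap a b p.2) with hφdef
  have hφ_keep : ∀ p : Fin d × Fin d, ((p.1 = a ∧ p.2 < b) ∨ (p.2 = b ∧ a < p.1)) → φ p = p := by
    intro p h; simp only [hφdef]; exact if_pos h
  have hφ_not : ∀ p : Fin d × Fin d, ¬((p.1 = a ∧ p.2 < b) ∨ (p.2 = b ∧ a < p.1)) →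
      φ p = (Equiv.swap a b p.1, Equiv.swap a b p.2) := by
    intro p h; simp only [hφdef]; exact if_neg h
  have hswap_eq_a : ∀ x : Fin d, Equiv.swap a b x = a ↔ x = b := by
    intro x
    constructor
    · intro h
      have h' : Equiv.swap a b x = Equiv.swap a b b := by rw [h, Equiv.swap_apply_right]
      exact (Equiv.swap a b).injective h'
    · intro h; rw [h, Equiv.swap_apply_right]
  have hswap_eq_b : ∀ x : Fin d, Equiv.swap a b x = b ↔ x = a := by
    intro x
    constructor
    · intro h
      have h' : Equiv.swap a b x = Equiv.swap a b a := by rw [h, Equiv.swap_apply_left]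
      exact (Equiv.swap a b).injective h'
    · intro h; rw [h, Equiv.swap_apply_left]
  have hinvol : ∀ p q : Fin d, p < q → φ (φ (p, q)) = (p, q) := by
    intro p q hpq
    by_cases hk : ((p, q).1 = a ∧ (p, q).2 < b) ∨ ((p, q).2 = b ∧ a < (p, q).1)
    · rw [hφ_keep _ hk, hφ_keep _ hk]
    · rw [hφ_not _ hk]
      have hk2 : ¬(((Equiv.swap a b p, Equiv.swap a b q).1 = a ∧
          (Equiv.swap a b p, Equiv.swap a b q).2 < b) ∨
          ((Equiv.swap a b p, Equiv.swap a b q).2 = b ∧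
            a < (Equiv.swap a b p, Equiv.swap a b q).1)) := by
        rintro (⟨h1, h2⟩ | ⟨h1, h2⟩)
        · have hpb : p = b := (hswap_eq_a p).1 h1
          have hqb : b < q := hpb ▸ hpq
          have hqa : q ≠ a := ne_of_gt (lt_trans hab hqb)
          have hqb' : q ≠ b := ne_of_gt hqb
          rw [Equiv.swap_apply_of_ne_of_ne hqa hqb'] at h2
          exact absurd h2 (not_lt.mpr hqb.le)
        · have hqa : q = a := (hswap_eq_b q).1 h1
          have hpa : p < a := hqa ▸ hpq
          have hpa' : p ≠ a := ne_of_lt hpa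
          have hpb' : p ≠ b := ne_of_lt (lt_trans hpa hab)
          rw [Equiv.swap_apply_of_ne_of_ne hpa' hpb'] at h2
          exact absurd h2 (not_lt.mpr hpa.le)
      rw [hφ_not _ hk2]
      simp [Equiv.swap_apply_self]
  have hfwd : ∀ p q : Fin d, p < q → π q < π p → φ (p, q) ∈ T ∧ φ (p, q) ≠ (a, b) := by
    intro p q hpq hinv
    rcases eq_or_ne p a with hpa | hpa
    · subst hpa
      rcases lt_trichotomy q b with hqb | hqb | hqb
      · rw [hφ_keep _ (Or.inl ⟨rfl, hqb⟩)]
        refine ⟨(memT _).2 ⟨hpq, ?_⟩, ?_⟩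
        · rw [hσo q (ne_of_gt hpq) (ne_of_lt hqb), hσa]
          exact lt_trans hinv hv
        · exact fun h => (ne_of_lt hqb) (congrArg Prod.snd h)
      · subst hqb
        exact absurd hv (not_lt.mpr hinv.le)
      · have hq : φ (p, q) = (b, q) := by
          rw [hφ_not _ ?_]
          · rw [Equiv.swap_apply_left,
              Equiv.swap_apply_of_ne_of_ne (ne_of_gt hpq) (ne_of_gt hqb)]
          · rintro (⟨_, h⟩ | ⟨h, _⟩)
            · exact absurd h (not_lt.mpr hqb.le)
            · exact (ne_of_gt hqb) h
        rw [hq]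
        refine ⟨(memT _).2 ⟨hqb, ?_⟩, ?_⟩
        · rw [hσo q (ne_of_gt hpq) (ne_of_gt hqb), hσb]
          exact hinv
        · exact fun h => hne (congrArg Prod.fst h).symm
    · rcases eq_or_ne q b with hqb | hqb
      · subst hqb
        rcases lt_or_gt_of_ne hpa with hpa' | hpa'
        · have hq : φ (p, q) = (p, a) := by
            rw [hφ_not _ ?_]
            · rw [Equiv.swap_apply_right,
                Equiv.swap_apply_of_ne_of_ne hpa (ne_of_lt hpq)]
            · rintro (⟨h, _⟩ | ⟨_, h⟩)
              · exact hpa h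
              · exact absurd h (not_lt.mpr hpa'.le)
          rw [hq]
          refine ⟨(memT _).2 ⟨hpa', ?_⟩, ?_⟩
          · rw [hσa, hσo p hpa (ne_of_lt hpq)]
            exact hinv
          · exact fun h => hne (congrArg Prod.snd h)
        · rw [hφ_keep _ (Or.inr ⟨rfl, hpa'⟩)]
          refine ⟨(memT _).2 ⟨hpq, ?_⟩, ?_⟩
          · rw [hσb, hσo p hpa (ne_of_lt hpq)]
            exact lt_trans hv hinv
          · exact fun h => hpa (congrArg Prod.fst h)
      · rcases eq_or_ne p b with hpb | hpb
        · subst hpb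
          have hq : φ (p, q) = (a, q) := by
            rw [hφ_not _ ?_]
            · rw [Equiv.swap_apply_right,
                Equiv.swap_apply_of_ne_of_ne (ne_of_gt (lt_trans hab hpq)) hqb]
            · rintro (⟨h, _⟩ | ⟨h, _⟩)
              · exact hne h.symm
              · exact hqb h
          rw [hq]
          refine ⟨(memT _).2 ⟨lt_trans hab hpq, ?_⟩, ?_⟩
          · rw [hσa, hσo q (ne_of_gt (lt_trans hab hpq)) hqb]
            exact hinv
          · exact fun h => hqb (congrArg Prod.snd h)
        · rcases eq_or_ne q a with hqa | hqa
          · subst hqa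
            have hq : φ (p, q) = (p, b) := by
              rw [hφ_not _ ?_]
              · rw [Equiv.swap_apply_left,
                  Equiv.swap_apply_of_ne_of_ne (ne_of_lt hpq) hpb]
              · rintro (⟨h, _⟩ | ⟨h, _⟩)
                · exact (ne_of_lt hpq) h
                · exact hne h
            rw [hq]
            refine ⟨(memT _).2 ⟨lt_trans hpq hab, ?_⟩, ?_⟩
            · rw [hσb, hσo p (ne_of_lt hpq) hpb]
              exact hinv
            · exact fun h => (ne_of_lt hpq) (congrArg Prod.fst h)
          · have hq : φ (p, q) = (p, q) := by
              rw [hφ_not _ ?_]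
              · rw [Equiv.swap_apply_of_ne_of_ne hpa hpb,
                  Equiv.swap_apply_of_ne_of_ne hqa hqb]
              · rintro (⟨h, _⟩ | ⟨h, _⟩)
                · exact hpa h
                · exact hqb h
            rw [hq]
            refine ⟨(memT _).2 ⟨hpq, ?_⟩, ?_⟩
            · rw [hσo q hqa hqb, hσo p hpa hpb]
              exact hinv
            · exact fun h => hpa (congrArg Prod.fst h)
  have hbwd : ∀ p q : Fin d, p < q → σ q < σ p → (p, q) ≠ (a, b) → φ (p, q) ∈ S := by
    intro p q hpq hinv hne'
    rcases eq_or_ne p a with hpa | hpa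
    · subst hpa
      rcases lt_trichotomy q b with hqb | hqb | hqb
      · rw [hφ_keep _ (Or.inl ⟨rfl, hqb⟩)]
        refine (memS _).2 ⟨hpq, ?_⟩
        rw [hσo q (ne_of_gt hpq) (ne_of_lt hqb), hσa] at hinv
        rcases hmid q hpq hqb with h | h
        · exact h
        · exact absurd hinv (not_lt.mpr h.le)
      · exact absurd (by rw [hqb] : (p, q) = (p, b)) hne'
      · have hq : φ (p, q) = (b, q) := by
          rw [hφ_not _ ?_]
          · rw [Equiv.swap_apply_left,
              Equiv.swap_apply_of_ne_of_ne (ne_of_gt hpq) (ne_of_gt hqb)]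
          · rintro (⟨_, h⟩ | ⟨h, _⟩)
            · exact absurd h (not_lt.mpr hqb.le)
            · exact (ne_of_gt hqb) h
        rw [hq]
        refine (memS _).2 ⟨hqb, ?_⟩
        rw [hσo q (ne_of_gt hpq) (ne_of_gt hqb), hσa] at hinv
        exact hinv
    · rcases eq_or_ne q b with hqb | hqb
      · subst hqb
        rcases lt_or_gt_of_ne hpa with hpa' | hpa'
        · have hq : φ (p, q) = (p, a) := by
            rw [hφ_not _ ?_]
            · rw [Equiv.swap_apply_right,
                Equiv.swap_apply_of_ne_of_ne hpa (ne_of_lt hpq)]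
            · rintro (⟨h, _⟩ | ⟨_, h⟩)
              · exact hpa h
              · exact absurd h (not_lt.mpr hpa'.le)
          rw [hq]
          refine (memS _).2 ⟨hpa', ?_⟩
          rw [hσb, hσo p hpa (ne_of_lt hpq)] at hinv
          exact hinv
        · rw [hφ_keep _ (Or.inr ⟨rfl, hpa'⟩)]
          refine (memS _).2 ⟨hpq, ?_⟩
          rw [hσb, hσo p hpa (ne_of_lt hpq)] at hinv
          rcases hmid p hpa' hpq with h | h
          · exact absurd hinv (not_lt.mpr h.le)
          · exact h
      · rcases eq_or_ne p b with hpb | hpb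
        · subst hpb
          have hq : φ (p, q) = (a, q) := by
            rw [hφ_not _ ?_]
            · rw [Equiv.swap_apply_right,
                Equiv.swap_apply_of_ne_of_ne (ne_of_gt (lt_trans hab hpq)) hqb]
            · rintro (⟨h, _⟩ | ⟨h, _⟩)
              · exact hne h.symm
              · exact hqb h
          rw [hq]
          refine (memS _).2 ⟨lt_trans hab hpq, ?_⟩
          rw [hσb, hσo q (ne_of_gt (lt_trans hab hpq)) hqb] at hinv
          exact hinv
        · rcases eq_or_ne q a with hqa | hqa
          · subst hqa
            have hq : φ (p, q) = (p, b) := by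
              rw [hφ_not _ ?_]
              · rw [Equiv.swap_apply_left,
                  Equiv.swap_apply_of_ne_of_ne (ne_of_lt hpq) hpb]
              · rintro (⟨h, _⟩ | ⟨h, _⟩)
                · exact (ne_of_lt hpq) h
                · exact hne h
            rw [hq]
            refine (memS _).2 ⟨lt_trans hpq hab, ?_⟩
            rw [hσa, hσo p (ne_of_lt hpq) hpb] at hinv
            exact hinv
          · have hq : φ (p, q) = (p, q) := by
              rw [hφ_not _ ?_]
              · rw [Equiv.swap_apply_of_ne_of_ne hpa hpb,
                  Equiv.swap_apply_of_ne_of_ne hqa hqb]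
              · rintro (⟨h, _⟩ | ⟨h, _⟩)
                · exact hpa h
                · exact hqb h
            rw [hq]
            refine (memS _).2 ⟨hpq, ?_⟩
            rw [hσo q hqa hqb, hσo p hpa hpb] at hinv
            exact hinv
  have hcard : S.card = (T.erase (a, b)).card := by
    apply Finset.card_nbij' φ φ
    · intro x hx
      obtain ⟨p, q⟩ := x
      obtain ⟨hpq, hinv⟩ := (memS _).1 hx
      obtain ⟨h1, h2⟩ := hfwd p q hpq hinv
      exact Finset.mem_erase.2 ⟨h2, h1⟩
    · intro y hy
      obtain ⟨p, q⟩ := y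
      obtain ⟨hne', hyT⟩ := Finset.mem_erase.1 hy
      obtain ⟨hpq, hinv⟩ := (memT _).1 hyT
      exact hbwd p q hpq hinv hne'
    · intro x hx
      obtain ⟨p, q⟩ := x
      exact hinvol p q ((memS _).1 hx).1
    · intro y hy
      obtain ⟨p, q⟩ := y
      exact hinvol p q ((memT _).1 (Finset.mem_erase.1 hy).2).1
  have hTpos : 0 < T.card := Finset.card_pos.2 ⟨_, habT⟩
  have h2 : (T.erase (a, b)).card = T.card - 1 := Finset.card_erase_of_mem habT
  have h1 : inversions σ = T.card := rfl
  have h0 : inversions π = S.card := rfl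
  omega

lemma exists_cov_step {d : ℕ} (i j : Fin d → ℕ) (hi : Monotone i) (hj : Monotone j)
    (π : Equiv.Perm (Fin d)) (hπ : ∀ x, i x ≤ j (π x)) :
    ∀ k (a b : Fin d), (b : ℕ) - (a : ℕ) ≤ k → a < b → π a < π b → i b ≤ j (π a) →
    ∃ π' : Equiv.Perm (Fin d), (∀ x, i x ≤ j (π' x)) ∧ BruhatCov π π' ∧
      inversions π' = inversions π + 1 := by
  intro k
  induction k with
  | zero =>
    intro a b hk hab _ _
    exact absurd hk (by have := (Fin.lt_def).1 hab; omega)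
  | succ k ih =>
    intro a b hk hab hv hij
    by_cases hc : ∃ c : Fin d, a < c ∧ c < b ∧ π a < π c ∧ π c < π b
    · obtain ⟨c, h1, h2, h3, _⟩ := hc
      refine ih a c ?_ h1 h3 (le_trans (hi h2.le) hij)
      have hcb := (Fin.lt_def).1 h2
      have hac := (Fin.lt_def).1 h1
      omega
    · push_neg at hc
      have hmid : ∀ c : Fin d, a < c → c < b → π c < π a ∨ π b < π c := by
        intro c h1 h2
        have hca : π c ≠ π a := fun h => (ne_of_gt h1) (π.injective h)
        have hcb : π c ≠ π b := fun h => (ne_of_lt h2) (π.injective h)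
        rcases lt_or_gt_of_ne hca with h | h
        · exact Or.inl h
        · exact Or.inr (lt_of_le_of_ne (hc c h1 h2 h) (Ne.symm hcb))
      set σ := π * Equiv.swap a b with hσdef
      have hσa : σ a = π b := by
        simp [hσdef, Equiv.Perm.mul_apply, Equiv.swap_apply_left]
      have hσb : σ b = π a := by
        simp [hσdef, Equiv.Perm.mul_apply, Equiv.swap_apply_right]
      have hσo : ∀ x : Fin d, x ≠ a → x ≠ b → σ x = π x := by
        intro x h1 h2
        simp [hσdef, Equiv.Perm.mul_apply, Equiv.swap_apply_of_ne_of_ne h1 h2]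
      have hinv : inversions σ = inversions π + 1 := inversions_mul_swap π a b hab hv hmid
      refine ⟨σ, ?_, ⟨⟨a, b, hab, ?_, ?_⟩, hinv⟩, hinv⟩
      · intro x
        rcases eq_or_ne x a with hxa | hxa
        · subst hxa
          rw [hσa]
          exact le_trans (hπ x) (hj hv.le)
        · rcases eq_or_ne x b with hxb | hxb
          · subst hxb
            rw [hσb]
            exact hij
          · rw [hσo x hxa hxb]
            exact hπ x
      · rw [hσa, hσb]; exact hv
      · rw [hσdef, mul_assoc, Equiv.swap_mul_self, mul_one]

lemma exists_adm_pair {d : ℕ} (i j : Fin d → ℕ) (π π₀ : Equiv.Perm (Fin d))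
    (hπ : ∀ a, i a ≤ j (π a)) (hπ₀ : ∀ a, i a ≤ j (π₀ a))
    (h₀ : ¬ ∃ a b : Fin d, a < b ∧ π₀ a < π₀ b ∧ i b ≤ j (π₀ a))
    (hne : π ≠ π₀) :
    ∃ a b : Fin d, a < b ∧ π a < π b ∧ i b ≤ j (π a) := by
  classical
  have hA : (Finset.univ.filter fun a : Fin d => π a ≠ π₀ a).Nonempty := by
    by_contra h
    apply hne
    apply Equiv.ext
    intro x
    by_contra hx
    exact h ⟨x, Finset.mem_filter.2 ⟨Finset.mem_univ x, hx⟩⟩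
  set A := Finset.univ.filter fun a : Fin d => π a ≠ π₀ a with hAdef
  obtain ⟨a, haA⟩ := hA
  set a₀ := A.max' ⟨a, haA⟩ with ha₀def
  have ha₀A : a₀ ∈ A := A.max'_mem _
  have ha₀ : π a₀ ≠ π₀ a₀ := (Finset.mem_filter.1 ha₀A).2
  have hagree : ∀ x : Fin d, a₀ < x → π x = π₀ x := by
    intro x hx
    by_contra h
    have hxA : x ∈ A := Finset.mem_filter.2 ⟨Finset.mem_univ x, h⟩
    exact absurd (A.le_max' x hxA) (not_le.mpr hx)
  rcases lt_or_gt_of_ne ha₀ with hlt | hgt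
  · -- π a₀ < π₀ a₀ : contradiction with h₀
    exfalso
    apply h₀
    set a'' := π₀.symm (π a₀) with ha''def
    have h1 : π₀ a'' = π a₀ := π₀.apply_symm_apply _
    have h2 : a'' ≠ a₀ := by
      intro h
      rw [h] at h1
      exact ha₀ h1.symm
    have h3 : a'' < a₀ := by
      rcases lt_or_gt_of_ne h2 with h | h
      · exact h
      · exfalso
        have := hagree a'' h
        rw [← this] at h1
        exact h2 (π.injective h1)
    exact ⟨a'', a₀, h3, by rw [h1]; exact hlt, by rw [h1]; exact hπ a₀⟩
  · -- π₀ a₀ < π a₀ : produce a pair for π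
    set a'' := π.symm (π₀ a₀) with ha''def
    have h1 : π a'' = π₀ a₀ := π.apply_symm_apply _
    have h2 : a'' ≠ a₀ := by
      intro h
      rw [h] at h1
      exact ha₀ h1
    have h3 : a'' < a₀ := by
      rcases lt_or_gt_of_ne h2 with h | h
      · exact h
      · exfalso
        have := hagree a'' h
        rw [this] at h1
        exact h2 (π₀.injective h1)
    exact ⟨a'', a₀, h3, by rw [h1]; exact hgt, by rw [h1]; exact hπ₀ a₀⟩

/-- If `I ≤ J` componentwise then the set `X_{JI} = {π : ∀ a, i_a ≤ j_{π(a)}}` contains a maximum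
element with respect to the Bruhat order on `S_d`. -/
theorem exists_bruhat_max (d n : ℕ) (i j : Fin d → ℕ)
    (hi : StrictMono i) (hj : StrictMono j)
    (hi' : ∀ a, i a ∈ Finset.Icc 1 n) (hj' : ∀ a, j a ∈ Finset.Icc 1 n)
    (hIJ : ∀ a, i a ≤ j a) :
    ∃ π₀ : Equiv.Perm (Fin d), (∀ a, i a ≤ j (π₀ a)) ∧
      ∀ π : Equiv.Perm (Fin d), (∀ a, i a ≤ j (π a)) → BruhatLE π π₀ := by
  classical
  set X := Finset.univ.filter (fun π : Equiv.Perm (Fin d) => ∀ a, i a ≤ j (π a)) with hXdef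
  have hXmem : ∀ π : Equiv.Perm (Fin d), π ∈ X ↔ ∀ a, i a ≤ j (π a) := by
    intro π; simp [hXdef, Finset.mem_filter]
  have hXne : X.Nonempty := ⟨1, (hXmem 1).2 (by intro a; simpa using hIJ a)⟩
  obtain ⟨π₀, hπ₀X, hmax⟩ := X.exists_max_image inversions hXne
  have hπ₀ : ∀ a, i a ≤ j (π₀ a) := (hXmem π₀).1 hπ₀X
  have h₀ : ¬ ∃ a b : Fin d, a < b ∧ π₀ a < π₀ b ∧ i b ≤ j (π₀ a) := by
    rintro ⟨a, b, hab, hv, hij⟩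
    obtain ⟨π', hπ', _, hinv⟩ :=
      exists_cov_step i j hi.monotone hj.monotone π₀ hπ₀ ((b : ℕ) - (a : ℕ)) a b le_rfl hab hv hij
    have := hmax π' ((hXmem π').2 hπ')
    omega
  refine ⟨π₀, hπ₀, ?_⟩
  have main : ∀ k (π : Equiv.Perm (Fin d)), (∀ a, i a ≤ j (π a)) →
      inversions π₀ - inversions π ≤ k → BruhatLE π π₀ := by
    intro k
    induction k with
    | zero =>
      intro π hπ hk
      rcases eq_or_ne π π₀ with h | h
      · subst h; exact Relation.ReflTransGen.refl
      · exfalso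
        obtain ⟨a, b, hab, hv, hij⟩ := exists_adm_pair i j π π₀ hπ hπ₀ h₀ h
        obtain ⟨π', hπ', _, hinv⟩ :=
          exists_cov_step i j hi.monotone hj.monotone π hπ ((b : ℕ) - (a : ℕ)) a b le_rfl hab hv hij
        have := hmax π' ((hXmem π').2 hπ')
        have := hmax π ((hXmem π).2 hπ)
        omega
    | succ k ih =>
      intro π hπ hk
      rcases eq_or_ne π π₀ with h | h
      · subst h; exact Relation.ReflTransGen.refl
      · obtain ⟨a, b, hab, hv, hij⟩ := exists_adm_pair i j π π₀ hπ hπ₀ h₀ h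
        obtain ⟨π', hπ', hcov, hinv⟩ :=
          exists_cov_step i j hi.monotone hj.monotone π hπ ((b : ℕ) - (a : ℕ)) a b le_rfl hab hv hij
        have hle := hmax π' ((hXmem π').2 hπ')
        exact Relation.ReflTransGen.head hcov (ih π' hπ' (by omega))
  intro π hπ
  exact main (inversions π₀) π hπ (Nat.sub_le _ _)
end

section
/- Let $\mathbf{k}$ be a field and $n \geq d \geq 1$. Define the algebra $A_n^{(d)}$ as the quotient of the incidence algebra of the poset of $d$-element subsets of $\{1,\dots,n\}$ (ordered componentwise via increasing enumerations) by the two-sided ideal generated by the basis elements $f_{JI}$ for which there exists an index $1 \leq a < d$ with $j_a \geq i_{a+1}$. Then the $\mathbf{k}$-dimension of $A_n^{(d)}$ equals the number of pairs $(I, J)$ of $d$-element subsets of $\{1,\dots,n\}$ with $i_a \leq j_a \leq i_{a+1} - 1$ for all $1 \leq a < d$ and $i_d \leq j_d$, which equals $\binom{n+d}{2d}$. -/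
/-- The poset of `d`-element subsets of `{1,…,n}`, encoded as strictly increasing enumerations
`Fin d → Fin (n+1)` with values in `{1,…,n}`, equipped with the componentwise (product) order. -/
abbrev SubsetPoset (n d : ℕ) : Type :=
  {f : Fin d → Fin (n + 1) // (∀ a b : Fin d, a < b → f a < f b) ∧ ∀ a : Fin d, 1 ≤ (f a : ℕ)}

instance (n d : ℕ) : DecidableRel (α := SubsetPoset n d) (· ≤ ·) :=
  fun I J => decidable_of_iff (∀ a, I.1 a ≤ J.1 a) Iff.rfl

instance (n d : ℕ) : DecidableRel (α := SubsetPoset n d) (· < ·) :=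
  fun I J => decidable_of_iff (I ≤ J ∧ ¬J ≤ I) lt_iff_le_not_ge.symm

instance (n d : ℕ) : LocallyFiniteOrder (SubsetPoset n d) :=
  Fintype.toLocallyFiniteOrder

/-- The basis element `f_{JI}` of the incidence algebra (for `I ≤ J`), taking value `1` on the
pair `(I, J)` and `0` elsewhere. -/
def basisElt (𝕜 : Type*) [Semiring 𝕜] (n d : ℕ) (I J : SubsetPoset n d) :
    IncidenceAlgebra 𝕜 (SubsetPoset n d) :=
  ⟨fun x y => if x = I ∧ y = J ∧ I ≤ J then 1 else 0, by
    intro x y hxy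
    try dsimp only
    rw [if_neg]
    rintro ⟨rfl, rfl, hIJ⟩
    exact hxy hIJ⟩

/-- The relation whose induced ring congruence quotients the incidence algebra by the two-sided
ideal generated by the basis elements `f_{JI}`, `I ≤ J`, such that `j_a ≥ i_{a+1}` for some
`1 ≤ a < d`. -/
def auslanderRel (𝕜 : Type*) [Semiring 𝕜] (n d : ℕ) :
    IncidenceAlgebra 𝕜 (SubsetPoset n d) → IncidenceAlgebra 𝕜 (SubsetPoset n d) → Prop :=
  fun x y =>
    (∃ I J : SubsetPoset n d, I ≤ J ∧
      (∃ a b : Fin d, (b : ℕ) = (a : ℕ) + 1 ∧ (I.1 b : ℕ) ≤ (J.1 a : ℕ)) ∧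
      x = basisElt 𝕜 n d I J) ∧ y = 0

/-- The pairs `(I, J)` of `d`-element subsets of `{1,…,n}` with
`i_a ≤ j_a ≤ i_{a+1} - 1` for `1 ≤ a < d` and `i_d ≤ j_d`. -/
def interleavingPairs (n d : ℕ) : Finset ((Fin d → Fin (n + 1)) × (Fin d → Fin (n + 1))) :=
  Finset.univ.filter fun p =>
    (∀ a b : Fin d, a < b → p.1 a < p.1 b) ∧
    (∀ a b : Fin d, a < b → p.2 a < p.2 b) ∧
    (∀ a : Fin d, 1 ≤ (p.1 a : ℕ)) ∧
    (∀ a : Fin d, 1 ≤ (p.2 a : ℕ)) ∧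
    (∀ a : Fin d, (p.1 a : ℕ) ≤ (p.2 a : ℕ)) ∧
    (∀ a b : Fin d, (b : ℕ) = (a : ℕ) + 1 → (p.2 a : ℕ) < (p.1 b : ℕ))

open Finset

namespace AusAux

variable {𝕜 : Type*} [Field 𝕜] {n d : ℕ}

lemma basisElt_apply (I J x y : SubsetPoset n d) :
    basisElt 𝕜 n d I J x y = if x = I ∧ y = J ∧ I ≤ J then 1 else 0 := rfl

lemma le_val {I J : SubsetPoset n d} (h : I ≤ J) (a : Fin d) : (I.1 a : ℕ) ≤ (J.1 a : ℕ) := h a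

/-- The pairs generating the ideal. -/
def Bad (I J : SubsetPoset n d) : Prop :=
  I ≤ J ∧ ∃ a b : Fin d, (b : ℕ) = (a : ℕ) + 1 ∧ (I.1 b : ℕ) ≤ (J.1 a : ℕ)

variable (𝕜 n d) in
/-- The span of the bad basis elements. -/
def MM : Submodule 𝕜 (IncidenceAlgebra 𝕜 (SubsetPoset n d)) :=
  Submodule.span 𝕜 {x | ∃ I J : SubsetPoset n d, Bad I J ∧ x = basisElt 𝕜 n d I J}

lemma sum_apply' {ι : Type*} (s : Finset ι) (F : ι → IncidenceAlgebra 𝕜 (SubsetPoset n d))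
    (a b : SubsetPoset n d) : (∑ i ∈ s, F i) a b = ∑ i ∈ s, F i a b := by
  induction s using Finset.cons_induction with
  | empty => simp
  | cons i s his ih => rw [Finset.sum_cons, Finset.sum_cons, IncidenceAlgebra.add_apply, ih]

lemma basisElt_mul (I J : SubsetPoset n d) (hIJ : I ≤ J)
    (g : IncidenceAlgebra 𝕜 (SubsetPoset n d)) :
    basisElt 𝕜 n d I J * g
      = ∑ K ∈ univ.filter (fun K => J ≤ K), g J K • basisElt 𝕜 n d I K := by
  ext x y hxy
  rw [IncidenceAlgebra.mul_apply, sum_apply']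
  simp only [IncidenceAlgebra.constSMul_apply, basisElt_apply, smul_eq_mul]
  by_cases hxI : x = I
  · subst hxI
    by_cases hJy : J ≤ y
    · rw [Finset.sum_eq_single_of_mem J (Finset.mem_Icc.mpr ⟨hIJ, hJy⟩) ?h1,
        Finset.sum_eq_single_of_mem y (Finset.mem_filter.mpr ⟨Finset.mem_univ _, hJy⟩) ?h2]
      · rw [if_pos ⟨rfl, rfl, hIJ⟩, one_mul, if_pos ⟨rfl, rfl, hxy⟩, mul_one]
      case h1 =>
        intro z _ hzJ
        rw [if_neg, zero_mul]
        rintro ⟨-, rfl, -⟩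
        exact hzJ rfl
      case h2 =>
        intro K _ hKy
        rw [if_neg, mul_zero]
        rintro ⟨-, rfl, -⟩
        exact hKy rfl
    · rw [Finset.sum_eq_zero, Finset.sum_eq_zero]
      · intro K hK
        rw [if_neg, mul_zero]
        rintro ⟨-, rfl, -⟩
        exact hJy (Finset.mem_filter.mp hK).2
      · intro z hz
        rw [if_neg, zero_mul]
        rintro ⟨-, rfl, -⟩
        exact hJy (Finset.mem_Icc.mp hz).2
  · rw [Finset.sum_eq_zero, Finset.sum_eq_zero]
    · intro K _; rw [if_neg, mul_zero]; rintro ⟨rfl, -, -⟩; exact hxI rfl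
    · intro z _; rw [if_neg, zero_mul]; rintro ⟨rfl, -, -⟩; exact hxI rfl

lemma mul_basisElt (I J : SubsetPoset n d) (hIJ : I ≤ J)
    (g : IncidenceAlgebra 𝕜 (SubsetPoset n d)) :
    g * basisElt 𝕜 n d I J
      = ∑ H ∈ univ.filter (fun H => H ≤ I), g H I • basisElt 𝕜 n d H J := by
  ext x y hxy
  rw [IncidenceAlgebra.mul_apply, sum_apply']
  simp only [IncidenceAlgebra.constSMul_apply, basisElt_apply, smul_eq_mul]
  by_cases hyJ : y = J
  · subst hyJ
    by_cases hxI : x ≤ I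
    · have hxmem : x ∈ univ.filter (fun H : SubsetPoset n d => H ≤ I) :=
        Finset.mem_filter.mpr ⟨Finset.mem_univ _, hxI⟩
      rw [Finset.sum_eq_single_of_mem I (Finset.mem_Icc.mpr ⟨hxI, hIJ⟩) ?h1,
        Finset.sum_eq_single_of_mem x hxmem ?h2]
      · rw [if_pos ⟨rfl, rfl, hIJ⟩, mul_one, if_pos ⟨rfl, rfl, hxy⟩, mul_one]
      case h1 =>
        intro z _ hzI
        rw [if_neg, mul_zero]
        rintro ⟨rfl, -, -⟩
        exact hzI rfl
      case h2 =>
        intro H _ hHx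
        rw [if_neg, mul_zero]
        rintro ⟨rfl, -, -⟩
        exact hHx rfl
    · rw [Finset.sum_eq_zero, Finset.sum_eq_zero]
      · intro H hH
        rw [if_neg, mul_zero]
        rintro ⟨rfl, -, -⟩
        exact hxI (Finset.mem_filter.mp hH).2
      · intro z hz
        rw [if_neg, mul_zero]
        rintro ⟨rfl, -, -⟩
        exact hxI (Finset.mem_Icc.mp hz).1
  · rw [Finset.sum_eq_zero, Finset.sum_eq_zero]
    · intro H _; rw [if_neg, mul_zero]; rintro ⟨-, rfl, -⟩; exact hyJ rfl
    · intro z _; rw [if_neg, mul_zero]; rintro ⟨-, rfl, -⟩; exact hyJ rfl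

lemma smul_mul' (r : 𝕜) (x c : IncidenceAlgebra 𝕜 (SubsetPoset n d)) :
    (r • x) * c = r • (x * c) := by
  ext a b _
  rw [IncidenceAlgebra.constSMul_apply, IncidenceAlgebra.mul_apply, IncidenceAlgebra.mul_apply,
    Finset.smul_sum]
  refine Finset.sum_congr rfl fun z _ => ?_
  rw [IncidenceAlgebra.constSMul_apply, smul_eq_mul, smul_eq_mul, mul_assoc]

lemma mul_smul' (r : 𝕜) (x c : IncidenceAlgebra 𝕜 (SubsetPoset n d)) :
    c * (r • x) = r • (c * x) := by
  ext a b _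
  rw [IncidenceAlgebra.constSMul_apply, IncidenceAlgebra.mul_apply, IncidenceAlgebra.mul_apply,
    Finset.smul_sum]
  refine Finset.sum_congr rfl fun z _ => ?_
  rw [IncidenceAlgebra.constSMul_apply, smul_eq_mul, smul_eq_mul, mul_left_comm]

lemma mul_mem_MM {x : IncidenceAlgebra 𝕜 (SubsetPoset n d)} (hx : x ∈ MM 𝕜 n d)
    (c : IncidenceAlgebra 𝕜 (SubsetPoset n d)) : x * c ∈ MM 𝕜 n d := by
  induction hx using Submodule.span_induction with
  | mem x hx =>
    obtain ⟨I, J, hBad, rfl⟩ := hx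
    rw [basisElt_mul I J hBad.1 c]
    refine Submodule.sum_mem _ fun K hK => Submodule.smul_mem _ _ (Submodule.subset_span ?_)
    obtain ⟨a, b, hab, hba⟩ := hBad.2
    exact ⟨I, K, ⟨hBad.1.trans (Finset.mem_filter.mp hK).2, a, b, hab,
      hba.trans (le_val (Finset.mem_filter.mp hK).2 a)⟩, rfl⟩
  | zero => rw [zero_mul]; exact Submodule.zero_mem _
  | add x y hx hy ihx ihy => rw [add_mul]; exact Submodule.add_mem _ ihx ihy
  | smul r x hx ih => rw [smul_mul']; exact Submodule.smul_mem _ _ ih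

lemma mem_MM_mul {x : IncidenceAlgebra 𝕜 (SubsetPoset n d)} (hx : x ∈ MM 𝕜 n d)
    (c : IncidenceAlgebra 𝕜 (SubsetPoset n d)) : c * x ∈ MM 𝕜 n d := by
  induction hx using Submodule.span_induction with
  | mem x hx =>
    obtain ⟨I, J, hBad, rfl⟩ := hx
    rw [mul_basisElt I J hBad.1 c]
    refine Submodule.sum_mem _ fun H hH => Submodule.smul_mem _ _ (Submodule.subset_span ?_)
    obtain ⟨a, b, hab, hba⟩ := hBad.2
    exact ⟨H, J, ⟨(Finset.mem_filter.mp hH).2.trans hBad.1, a, b, hab,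
      (le_val (Finset.mem_filter.mp hH).2 b).trans hba⟩, rfl⟩
  | zero => rw [mul_zero]; exact Submodule.zero_mem _
  | add x y hx hy ihx ihy => rw [mul_add]; exact Submodule.add_mem _ ihx ihy
  | smul r x hx ih => rw [mul_smul']; exact Submodule.smul_mem _ _ ih

lemma rel_sub_mem {x y : IncidenceAlgebra 𝕜 (SubsetPoset n d)}
    (h : RingQuot.Rel (auslanderRel 𝕜 n d) x y) : x - y ∈ MM 𝕜 n d := by
  induction h with
  | @of x y h =>
    replace h : (∃ I J : SubsetPoset n d, I ≤ J ∧
        (∃ a b : Fin d, (b : ℕ) = (a : ℕ) + 1 ∧ (I.1 b : ℕ) ≤ (J.1 a : ℕ)) ∧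
        x = basisElt 𝕜 n d I J) ∧ y = 0 := h
    obtain ⟨⟨I, J, hIJ, hab, rfl⟩, rfl⟩ := h
    have hmem : basisElt 𝕜 n d I J
        ∈ {x | ∃ I J : SubsetPoset n d, Bad I J ∧ x = basisElt 𝕜 n d I J} :=
      ⟨I, J, ⟨hIJ, hab⟩, rfl⟩
    rw [sub_zero]
    exact Submodule.subset_span (R := 𝕜) hmem
  | add_left h ih => simpa [add_sub_add_right_eq_sub] using ih
  | mul_left h ih => rw [← sub_mul]; exact mul_mem_MM ih _
  | mul_right h ih => rw [← mul_sub]; exact mem_MM_mul ih _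

lemma eqvGen_sub_mem {a b : IncidenceAlgebra 𝕜 (SubsetPoset n d)}
    (h : Relation.EqvGen (RingQuot.Rel (auslanderRel 𝕜 n d)) a b) : a - b ∈ MM 𝕜 n d := by
  induction h with
  | rel x y hxy => exact rel_sub_mem hxy
  | refl x => simpa using Submodule.zero_mem (MM 𝕜 n d)
  | symm x y _ ih => simpa using Submodule.neg_mem _ ih
  | trans x y z _ _ ih1 ih2 => simpa using Submodule.add_mem _ ih1 ih2

lemma mem_ip {p : (Fin d → Fin (n + 1)) × (Fin d → Fin (n + 1))} :
    p ∈ interleavingPairs n d ↔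
    (∀ a b : Fin d, a < b → p.1 a < p.1 b) ∧
    (∀ a b : Fin d, a < b → p.2 a < p.2 b) ∧
    (∀ a : Fin d, 1 ≤ (p.1 a : ℕ)) ∧
    (∀ a : Fin d, 1 ≤ (p.2 a : ℕ)) ∧
    (∀ a : Fin d, (p.1 a : ℕ) ≤ (p.2 a : ℕ)) ∧
    (∀ a b : Fin d, (b : ℕ) = (a : ℕ) + 1 → (p.2 a : ℕ) < (p.1 b : ℕ)) := by
  rw [interleavingPairs, Finset.mem_filter]
  simp only [Finset.mem_univ, true_and]

/-- First component of an interleaving pair, as an element of the poset. -/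
def pFst (p : ↥(interleavingPairs n d)) : SubsetPoset n d :=
  ⟨p.1.1, (mem_ip.mp p.2).1, (mem_ip.mp p.2).2.2.1⟩

/-- Second component of an interleaving pair, as an element of the poset. -/
def pSnd (p : ↥(interleavingPairs n d)) : SubsetPoset n d :=
  ⟨p.1.2, (mem_ip.mp p.2).2.1, (mem_ip.mp p.2).2.2.2.1⟩

lemma pFst_le_pSnd (p : ↥(interleavingPairs n d)) : pFst p ≤ pSnd p :=
  fun a => (mem_ip.mp p.2).2.2.2.2.1 a

lemma pair_eq {p q : ↥(interleavingPairs n d)} (h1 : pFst p = pFst q)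
    (h2 : pSnd p = pSnd q) : p = q :=
  Subtype.ext (Prod.ext (congrArg Subtype.val h1) (congrArg Subtype.val h2))

variable (𝕜 n d) in
/-- Restriction of an incidence algebra element to the interleaving (good) pairs. -/
def piMap : IncidenceAlgebra 𝕜 (SubsetPoset n d) →ₗ[𝕜] (↥(interleavingPairs n d) → 𝕜) where
  toFun f := fun p => f (pFst p) (pSnd p)
  map_add' f g := by funext p; simp [IncidenceAlgebra.add_apply]
  map_smul' c f := by funext p; simp [IncidenceAlgebra.constSMul_apply]

lemma piMap_apply (f : IncidenceAlgebra 𝕜 (SubsetPoset n d)) (p : ↥(interleavingPairs n d)) :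
    piMap 𝕜 n d f p = f (pFst p) (pSnd p) := rfl

lemma eq_sum_basisElt (f : IncidenceAlgebra 𝕜 (SubsetPoset n d)) :
    f = ∑ q ∈ (Finset.univ : Finset (SubsetPoset n d × SubsetPoset n d)),
        f q.1 q.2 • basisElt 𝕜 n d q.1 q.2 := by
  ext a b hab
  rw [sum_apply', Finset.sum_eq_single_of_mem (a, b) (Finset.mem_univ _)]
  · rw [IncidenceAlgebra.constSMul_apply, basisElt_apply, if_pos ⟨rfl, rfl, hab⟩, smul_eq_mul,
      mul_one]
  · rintro ⟨q1, q2⟩ - hq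
    rw [IncidenceAlgebra.constSMul_apply, basisElt_apply, if_neg, smul_zero]
    rintro ⟨rfl, rfl, -⟩
    exact hq rfl

lemma MM_le_ker : MM 𝕜 n d ≤ LinearMap.ker (piMap 𝕜 n d) := by
  rw [MM, Submodule.span_le]
  rintro x ⟨I, J, hBad, rfl⟩
  simp only [SetLike.mem_coe, LinearMap.mem_ker]
  funext p
  rw [Pi.zero_apply, piMap_apply, basisElt_apply, if_neg]
  rintro ⟨h1, h2, -⟩
  obtain ⟨a, b, hab, hle⟩ := hBad.2
  have h6 := (mem_ip.mp p.2).2.2.2.2.2 a b hab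
  have e1 : p.1.1 = I.1 := congrArg Subtype.val h1
  have e2 : p.1.2 = J.1 := congrArg Subtype.val h2
  rw [e1, e2] at h6
  omega

lemma ker_le_MM : LinearMap.ker (piMap 𝕜 n d) ≤ MM 𝕜 n d := by
  intro f hf
  rw [LinearMap.mem_ker] at hf
  have hf' : ∀ p : ↥(interleavingPairs n d), f (pFst p) (pSnd p) = 0 :=
    fun p => congrFun hf p
  rw [eq_sum_basisElt (𝕜 := 𝕜) f]
  refine Submodule.sum_mem _ fun q _ => ?_
  by_cases hle : q.1 ≤ q.2
  · by_cases hbad : ∃ a b : Fin d, (b : ℕ) = (a : ℕ) + 1 ∧ (q.1.1 b : ℕ) ≤ (q.2.1 a : ℕ)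
    · exact Submodule.smul_mem _ _ (Submodule.subset_span ⟨q.1, q.2, ⟨hle, hbad⟩, rfl⟩)
    · push_neg at hbad
      have hm : (q.1.1, q.2.1) ∈ interleavingPairs n d := by
        rw [mem_ip]
        exact ⟨q.1.2.1, q.2.2.1, q.1.2.2, q.2.2.2, fun a => hle a, hbad⟩
      have h0 : f q.1 q.2 = 0 := by
        have hz := hf' ⟨(q.1.1, q.2.1), hm⟩
        have e1 : pFst ⟨(q.1.1, q.2.1), hm⟩ = q.1 := Subtype.ext rfl
        have e2 : pSnd ⟨(q.1.1, q.2.1), hm⟩ = q.2 := Subtype.ext rfl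
        rwa [e1, e2] at hz
      rw [h0, zero_smul]
      exact Submodule.zero_mem _
  · have hz : basisElt 𝕜 n d q.1 q.2 = 0 := by
      ext a b _
      rw [IncidenceAlgebra.zero_apply, basisElt_apply, if_neg]
      rintro ⟨-, -, h⟩
      exact hle h
    rw [hz, smul_zero]
    exact Submodule.zero_mem _

lemma piMap_surj : Function.Surjective (piMap 𝕜 n d) := by
  intro v
  refine ⟨∑ p : ↥(interleavingPairs n d), v p • basisElt 𝕜 n d (pFst p) (pSnd p), ?_⟩
  funext q
  rw [piMap_apply, sum_apply', Finset.sum_eq_single_of_mem q (Finset.mem_univ _)]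
  · rw [IncidenceAlgebra.constSMul_apply, basisElt_apply, if_pos ⟨rfl, rfl, pFst_le_pSnd q⟩,
      smul_eq_mul, mul_one]
  · intro p _ hpq
    rw [IncidenceAlgebra.constSMul_apply, basisElt_apply, if_neg, smul_zero]
    rintro ⟨h1, h2, -⟩
    exact hpq (pair_eq h1.symm h2.symm)

variable (𝕜 n d) in
/-- The quotient map to the ring quotient, as a linear map. -/
noncomputable def mkL :
    IncidenceAlgebra 𝕜 (SubsetPoset n d) →ₗ[𝕜] RingQuot (auslanderRel 𝕜 n d) where
  toFun a := RingQuot.mkAlgHom 𝕜 (auslanderRel 𝕜 n d) a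
  map_add' a b := map_add _ a b
  map_smul' c a := map_smul (RingQuot.mkAlgHom 𝕜 (auslanderRel 𝕜 n d)) c a

lemma mkL_apply (a : IncidenceAlgebra 𝕜 (SubsetPoset n d)) :
    mkL 𝕜 n d a = RingQuot.mkAlgHom 𝕜 (auslanderRel 𝕜 n d) a := rfl

lemma MM_le_kerAlg : MM 𝕜 n d ≤ LinearMap.ker (mkL 𝕜 n d) := by
  rw [MM, Submodule.span_le]
  rintro x ⟨I, J, hBad, rfl⟩
  have hrel : auslanderRel 𝕜 n d (basisElt 𝕜 n d I J) 0 := by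
    unfold auslanderRel
    exact ⟨⟨I, J, hBad.1, hBad.2, rfl⟩, rfl⟩
  have hmk := RingQuot.mkAlgHom_rel 𝕜 hrel
  simp only [SetLike.mem_coe, LinearMap.mem_ker, mkL_apply]
  rw [hmk, map_zero]

set_option maxHeartbeats 1000000 in
variable (𝕜 n d) in
/-- The canonical map from the module-theoretic quotient to the ring quotient. -/
noncomputable def gmap :
    (IncidenceAlgebra 𝕜 (SubsetPoset n d) ⧸ MM 𝕜 n d) →ₗ[𝕜] RingQuot (auslanderRel 𝕜 n d) :=
  @Submodule.liftQ 𝕜 (IncidenceAlgebra 𝕜 (SubsetPoset n d)) inferInstance inferInstance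
    inferInstance (MM 𝕜 n d) 𝕜 (RingQuot (auslanderRel 𝕜 n d)) inferInstance inferInstance
    inferInstance (RingHom.id 𝕜) (mkL 𝕜 n d) MM_le_kerAlg

set_option maxHeartbeats 1000000 in
lemma gmap_mk (a : IncidenceAlgebra 𝕜 (SubsetPoset n d)) :
    gmap 𝕜 n d (Submodule.Quotient.mk a) = RingQuot.mkAlgHom 𝕜 (auslanderRel 𝕜 n d) a := rfl

set_option maxHeartbeats 1600000 in
set_option synthInstance.maxHeartbeats 400000 in
variable (𝕜 n d) in
lemma part1 : Module.finrank 𝕜 (RingQuot (auslanderRel 𝕜 n d)) = (interleavingPairs n d).card := by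
  classical
  have hmk : ∀ a : IncidenceAlgebra 𝕜 (SubsetPoset n d),
      RingQuot.mkAlgHom 𝕜 (auslanderRel 𝕜 n d) a
        = ⟨Quot.mk (RingQuot.Rel (auslanderRel 𝕜 n d)) a⟩ := by
    intro a
    have h1 : RingQuot.mkAlgHom 𝕜 (auslanderRel 𝕜 n d) a
        = RingQuot.mkRingHom (auslanderRel 𝕜 n d) a := by
      rw [← RingQuot.mkAlgHom_coe 𝕜 (auslanderRel 𝕜 n d)]
      rfl
    rw [h1, RingQuot.mkRingHom_def]
    rfl
  have hbij : Function.Bijective (gmap 𝕜 n d) := by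
    constructor
    · intro x y hxy
      obtain ⟨a, rfl⟩ := Submodule.Quotient.mk_surjective _ x
      obtain ⟨b, rfl⟩ := Submodule.Quotient.mk_surjective _ y
      rw [gmap_mk, gmap_mk, hmk, hmk] at hxy
      have h2 : Quot.mk (RingQuot.Rel (auslanderRel 𝕜 n d)) a = Quot.mk _ b :=
        congrArg RingQuot.toQuot hxy
      rw [Submodule.Quotient.eq]
      exact eqvGen_sub_mem (Quot.eqvGen_exact h2)
    · intro y
      obtain ⟨y⟩ := y
      induction y using Quot.ind with
      | _ a => exact ⟨Submodule.Quotient.mk a, by rw [gmap_mk, hmk]⟩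
  have e1 : Module.finrank 𝕜 (RingQuot (auslanderRel 𝕜 n d))
      = Module.finrank 𝕜 (IncidenceAlgebra 𝕜 (SubsetPoset n d) ⧸ MM 𝕜 n d) :=
    (LinearEquiv.ofBijective (gmap 𝕜 n d) hbij).finrank_eq.symm
  rw [e1, le_antisymm MM_le_ker ker_le_MM,
    (LinearMap.quotKerEquivOfSurjective _ piMap_surj).finrank_eq, Module.finrank_pi,
    Fintype.card_coe]

/-! ### Counting -/

/-- The interleaved enumeration of a pair: `e_{2a} = i_a - 1 + a`, `e_{2a+1} = j_a + a`. -/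
def eFun (n d : ℕ) (p : (Fin d → Fin (n + 1)) × (Fin d → Fin (n + 1))) (k : ℕ) : ℕ :=
  if h : k / 2 < d then
    (if k % 2 = 0 then (p.1 ⟨k / 2, h⟩ : ℕ) - 1 else (p.2 ⟨k / 2, h⟩ : ℕ)) + k / 2
  else 0

lemma eFun_even (p : (Fin d → Fin (n + 1)) × (Fin d → Fin (n + 1))) {a : ℕ} (ha : a < d) :
    eFun n d p (2 * a) = ((p.1 ⟨a, ha⟩ : ℕ) - 1) + a := by
  have h1 : 2 * a / 2 = a := by omega
  have h2 : 2 * a % 2 = 0 := by omega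
  have key : ∀ h : 2 * a / 2 < d, (⟨2 * a / 2, h⟩ : Fin d) = ⟨a, ha⟩ := fun h => by
    simp only [Fin.mk.injEq]; omega
  simp only [eFun]
  rw [dif_pos (by omega : 2 * a / 2 < d), if_pos h2, key, h1]

lemma eFun_odd (p : (Fin d → Fin (n + 1)) × (Fin d → Fin (n + 1))) {a : ℕ} (ha : a < d) :
    eFun n d p (2 * a + 1) = (p.2 ⟨a, ha⟩ : ℕ) + a := by
  have h1 : (2 * a + 1) / 2 = a := by omega
  have key : ∀ h : (2 * a + 1) / 2 < d, (⟨(2 * a + 1) / 2, h⟩ : Fin d) = ⟨a, ha⟩ := fun h => by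
    simp only [Fin.mk.injEq]; omega
  simp only [eFun]
  rw [dif_pos (by omega : (2 * a + 1) / 2 < d), if_neg (by omega), key, h1]

lemma eFun_lt (p : (Fin d → Fin (n + 1)) × (Fin d → Fin (n + 1))) {k : ℕ} (hk : k < 2 * d) :
    eFun n d p k < n + d := by
  have hkd : k / 2 < d := by omega
  simp only [eFun]
  rw [dif_pos hkd]
  split_ifs with h
  · have := (p.1 ⟨k / 2, hkd⟩).isLt
    omega
  · have := (p.2 ⟨k / 2, hkd⟩).isLt
    omega

lemma gap {m : ℕ} {f : ℕ → ℕ} (hf : ∀ k, k + 1 < m → f k < f (k + 1)) :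
    ∀ l k, l < m → k ≤ l → f k + (l - k) ≤ f l := by
  intro l
  induction l with
  | zero =>
    intro k _ hk
    have : k = 0 := by omega
    subst this
    simp
  | succ l ih =>
    intro k hl hk
    rcases Nat.eq_or_lt_of_le hk with h1 | h1
    · subst h1; simp
    · have h2 := ih k (by omega) (by omega)
      have h3 := hf l hl
      omega

lemma eFun_adj {p : (Fin d → Fin (n + 1)) × (Fin d → Fin (n + 1))}
    (hp : p ∈ interleavingPairs n d) : ∀ k, k + 1 < 2 * d → eFun n d p k < eFun n d p (k + 1) := by
  obtain ⟨c1, c2, c3, c4, c5, c6⟩ := mem_ip.mp hp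
  intro k hk
  rcases Nat.even_or_odd k with ⟨a, rfl⟩ | ⟨a, rfl⟩
  · have ha : a < d := by omega
    have e1 : a + a = 2 * a := by ring
    rw [e1, eFun_even p ha, eFun_odd p ha]
    have h3 := c3 ⟨a, ha⟩
    have h5 := c5 ⟨a, ha⟩
    omega
  · have ha : a < d := by omega
    have hb : a + 1 < d := by omega
    have e2 : 2 * a + 1 + 1 = 2 * (a + 1) := by ring
    rw [eFun_odd p ha, e2, eFun_even p hb]
    have h6 := c6 ⟨a, ha⟩ ⟨a + 1, hb⟩ rfl
    have h3 := c3 ⟨a + 1, hb⟩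
    omega

lemma eFun_strictMono {p : (Fin d → Fin (n + 1)) × (Fin d → Fin (n + 1))}
    (hp : p ∈ interleavingPairs n d) :
    StrictMono (fun k : Fin (2 * d) => eFun n d p k.1) := by
  intro k l hkl
  have h := gap (eFun_adj hp) l.1 k.1 l.2 (le_of_lt hkl)
  have hkl' : k.1 < l.1 := hkl
  simp only
  omega

lemma part2 (hd : 1 ≤ d) (hdn : d ≤ n) :
    (interleavingPairs n d).card = (n + d).choose (2 * d) := by
  classical
  rw [show (n + d).choose (2 * d) = ((Finset.range (n + d)).powersetCard (2 * d)).card by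
    rw [Finset.card_powersetCard, Finset.card_range]]
  refine Finset.card_bij
    (fun p _ => Finset.image (fun k : Fin (2 * d) => eFun n d p k.1) Finset.univ) ?_ ?_ ?_
  · intro p hp
    rw [Finset.mem_powersetCard]
    constructor
    · intro x hx
      obtain ⟨k, -, rfl⟩ := Finset.mem_image.mp hx
      exact Finset.mem_range.mpr (eFun_lt p k.2)
    · rw [Finset.card_image_of_injective _ (eFun_strictMono hp).injective, Finset.card_univ,
        Fintype.card_fin]
  · intro p hp q hq heq
    have heq' : Finset.image (fun k : Fin (2 * d) => eFun n d p k.1) Finset.univ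
        = Finset.image (fun k : Fin (2 * d) => eFun n d q k.1) Finset.univ := heq
    have hcards : (Finset.image (fun k : Fin (2 * d) => eFun n d p k.1) Finset.univ).card
        = 2 * d := by
      rw [Finset.card_image_of_injective _ (eFun_strictMono hp).injective, Finset.card_univ,
        Fintype.card_fin]
    have h1 := Finset.orderEmbOfFin_unique hcards
      (f := fun k : Fin (2 * d) => eFun n d p k.1)
      (fun x => Finset.mem_image_of_mem _ (Finset.mem_univ x)) (eFun_strictMono hp)
    have h2 := Finset.orderEmbOfFin_unique hcards
      (f := fun k : Fin (2 * d) => eFun n d q k.1)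
      (fun x => by rw [heq']; exact Finset.mem_image_of_mem _ (Finset.mem_univ x))
      (eFun_strictMono hq)
    have hfe : ∀ k : Fin (2 * d), eFun n d p k.1 = eFun n d q k.1 := fun k => by
      rw [congrFun h1 k, congrFun h2 k]
    have c3p := (mem_ip.mp hp).2.2.1
    have c3q := (mem_ip.mp hq).2.2.1
    have c4p := (mem_ip.mp hp).2.2.2.1
    have c4q := (mem_ip.mp hq).2.2.2.1
    refine Prod.ext ?_ ?_
    · funext a
      have h := hfe ⟨2 * a.1, by omega⟩
      rw [eFun_even p a.isLt, eFun_even q a.isLt] at h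
      have h3p := c3p ⟨a.1, a.isLt⟩
      have h3q := c3q ⟨a.1, a.isLt⟩
      have hval : (p.1 ⟨a.1, a.isLt⟩ : ℕ) = (q.1 ⟨a.1, a.isLt⟩ : ℕ) := by omega
      exact Fin.ext hval
    · funext a
      have h := hfe ⟨2 * a.1 + 1, by omega⟩
      rw [eFun_odd p a.isLt, eFun_odd q a.isLt] at h
      have hval : (p.2 ⟨a.1, a.isLt⟩ : ℕ) = (q.2 ⟨a.1, a.isLt⟩ : ℕ) := by omega
      exact Fin.ext hval
  · intro s hs
    rw [Finset.mem_powersetCard] at hs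
    obtain ⟨hsub, hcard⟩ := hs
    set E := s.orderEmbOfFin hcard with hE
    have hlt : ∀ k : Fin (2 * d), E k < n + d :=
      fun k => Finset.mem_range.mp (hsub (Finset.orderEmbOfFin_mem s hcard k))
    set F : ℕ → ℕ := fun k => if h : k < 2 * d then E ⟨k, h⟩ else 0 with hF
    have hFd : ∀ k, ∀ h : k < 2 * d, F k = E ⟨k, h⟩ := by
      intro k h
      simp only [hF]
      rw [dif_pos h]
    have hadj : ∀ k, k + 1 < 2 * d → F k < F (k + 1) := by
      intro k hk
      rw [hFd k (by omega), hFd (k + 1) hk]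
      exact E.strictMono (by simp [Fin.lt_def])
    have hgap := gap hadj
    have hge : ∀ k, k < 2 * d → k ≤ F k := by
      intro k hk
      have := hgap k 0 hk (Nat.zero_le _)
      omega
    have hub : ∀ k, k < 2 * d → F k + (2 * d - 1 - k) ≤ n + d - 1 := by
      intro k hk
      have h1 := hgap (2 * d - 1) k (by omega) (by omega)
      have h2 : F (2 * d - 1) < n + d := by
        rw [hFd (2 * d - 1) (by omega)]
        exact hlt _
      omega
    have hb1 : ∀ a : Fin d, F (2 * a.1) + 1 - a.1 < n + 1 := by
      intro a
      have ha : a.1 < d := a.isLt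
      have h1 := hub (2 * a.1) (by omega)
      have h2 := hge (2 * a.1) (by omega)
      omega
    have hb2 : ∀ a : Fin d, F (2 * a.1 + 1) - a.1 < n + 1 := by
      intro a
      have ha : a.1 < d := a.isLt
      have h1 := hub (2 * a.1 + 1) (by omega)
      have h2 := hge (2 * a.1 + 1) (by omega)
      omega
    set p : (Fin d → Fin (n + 1)) × (Fin d → Fin (n + 1)) :=
      (fun a => ⟨F (2 * a.1) + 1 - a.1, hb1 a⟩, fun a => ⟨F (2 * a.1 + 1) - a.1, hb2 a⟩)
      with hpdef
    have hmem : p ∈ interleavingPairs n d := by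
      rw [mem_ip]
      refine ⟨?_, ?_, ?_, ?_, ?_, ?_⟩
      · intro a b hab
        have hab' : a.1 < b.1 := hab
        have hg := hgap (2 * b.1) (2 * a.1) (by omega) (by omega)
        have h2 := hge (2 * a.1) (by omega)
        simp only [hpdef, Fin.mk_lt_mk]
        omega
      · intro a b hab
        have hab' : a.1 < b.1 := hab
        have hg := hgap (2 * b.1 + 1) (2 * a.1 + 1) (by omega) (by omega)
        have h2 := hge (2 * a.1 + 1) (by omega)
        simp only [hpdef, Fin.mk_lt_mk]
        omega
      · intro a
        have h2 := hge (2 * a.1) (by omega)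
        simp only [hpdef]
        omega
      · intro a
        have h2 := hge (2 * a.1 + 1) (by omega)
        simp only [hpdef]
        omega
      · intro a
        have hg := hgap (2 * a.1 + 1) (2 * a.1) (by omega) (by omega)
        have h2 := hge (2 * a.1) (by omega)
        simp only [hpdef]
        omega
      · intro a b hab
        have hg := hgap (2 * b.1) (2 * a.1 + 1) (by omega) (by omega)
        have h2 := hge (2 * a.1 + 1) (by omega)
        simp only [hpdef]
        omega
    refine ⟨p, hmem, ?_⟩
    have hfe : (fun k : Fin (2 * d) => eFun n d p k.1) = fun k => E k := by
      funext k
      have hEk : F k.1 = E k := hFd k.1 k.isLt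
      rw [← hEk]
      rcases Nat.even_or_odd k.1 with ⟨a, hae⟩ | ⟨a, hae⟩
      · have ha : a < d := by
          have := k.isLt
          omega
        have hk2 : (k : ℕ) = 2 * a := by omega
        rw [hk2, eFun_even p ha]
        have h1 : (p.1 ⟨a, ha⟩ : ℕ) = F (2 * a) + 1 - a := rfl
        have h3 := hge (2 * a) (by omega)
        omega
      · have ha : a < d := by
          have := k.isLt
          omega
        have hk2 : (k : ℕ) = 2 * a + 1 := by omega
        rw [hk2, eFun_odd p ha]
        have h1 : (p.2 ⟨a, ha⟩ : ℕ) = F (2 * a + 1) - a := rfl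
        have h3 := hge (2 * a + 1) (by omega)
        omega
    rw [hfe]
    ext x
    simp only [Finset.mem_image, Finset.mem_univ, true_and]
    constructor
    · rintro ⟨k, rfl⟩
      exact Finset.orderEmbOfFin_mem s hcard k
    · intro hx
      have : x ∈ Set.range E := by
        rw [hE, Finset.range_orderEmbOfFin]
        exact hx
      obtain ⟨k, rfl⟩ := this
      exact ⟨k, rfl⟩

end AusAux

set_option maxHeartbeats 1600000 in
set_option synthInstance.maxHeartbeats 400000 in
/-- The `𝕜`-dimension of the higher Auslander algebra `A_n^{(d)}`, i.e. of the quotient of the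
incidence algebra of the poset of `d`-element subsets of `{1,…,n}` by the two-sided ideal
generated by the `f_{JI}` with `j_a ≥ i_{a+1}` for some `a < d`, equals the number of
interleaving pairs `(I, J)`, which in turn equals `(n+d).choose (2d)`. -/
theorem finrank_higher_auslander (𝕜 : Type*) [Field 𝕜] (n d : ℕ) (hd : 1 ≤ d) (hdn : d ≤ n) :
    Module.finrank 𝕜 (RingQuot (auslanderRel 𝕜 n d)) = (interleavingPairs n d).card ∧
    (interleavingPairs n d).card = (n + d).choose (2 * d) := by
  exact ⟨AusAux.part1 𝕜 n d, AusAux.part2 hd hdn⟩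
end

section
/- For all $n \geq d \geq 0$, the number of pairs $(I,J)$ of $d$-element subsets of $\{1,\dots,n\}$ with increasing enumerations satisfying $i_a \leq j_a < i_{a+1}$ for all $1 \leq a < d$ and $i_d \leq j_d \leq n$ equals $\binom{n+d}{2d}$. -/
open Finset

namespace IPaux

variable {n d : ℕ}

/-- Extend a `Fin d`-indexed family to `ℕ`. -/
def ext1 (n d : ℕ) (f : Fin d → Fin (n + 1)) (a : ℕ) : ℕ :=
  if h : a < d then (f ⟨a, h⟩ : ℕ) else 0

lemma ext1_eq (f : Fin d → Fin (n + 1)) (a : Fin d) : ext1 n d f a = f a := by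
  simp [ext1, a.isLt]

/-- The merged sequence of a pair. -/
def mval (n d : ℕ) (p : (Fin d → Fin (n + 1)) × (Fin d → Fin (n + 1))) (k : ℕ) : ℕ :=
  if k % 2 = 0 then ext1 n d p.1 (k / 2) + k / 2 - 1 else ext1 n d p.2 (k / 2) + k / 2

lemma mval_even (p : (Fin d → Fin (n + 1)) × (Fin d → Fin (n + 1))) (a : Fin d) :
    mval n d p (2 * a) = (p.1 a : ℕ) + a - 1 := by
  have h2 : 2 * (a : ℕ) / 2 = a := by omega
  unfold mval
  rw [if_pos (by omega), h2, ext1_eq]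

lemma mval_odd (p : (Fin d → Fin (n + 1)) × (Fin d → Fin (n + 1))) (a : Fin d) :
    mval n d p (2 * a + 1) = (p.2 a : ℕ) + a := by
  have h2 : (2 * (a : ℕ) + 1) / 2 = a := by omega
  unfold mval
  rw [if_neg (by omega), h2, ext1_eq]

lemma kcases {k : ℕ} (hk : k < 2 * d) :
    ∃ a : Fin d, k = 2 * (a : ℕ) ∨ k = 2 * (a : ℕ) + 1 :=
  ⟨⟨k / 2, by omega⟩, by show k = 2 * (k / 2) ∨ k = 2 * (k / 2) + 1; omega⟩

lemma mval_lt (p : (Fin d → Fin (n + 1)) × (Fin d → Fin (n + 1))) (k : ℕ) (hk : k < 2 * d) :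
    mval n d p k < n + d := by
  obtain ⟨a, rfl | rfl⟩ := kcases hk
  · rw [mval_even]; have := (p.1 a).is_le; have := a.isLt; omega
  · rw [mval_odd]; have := (p.2 a).is_le; have := a.isLt; omega

lemma gap (M : ℕ → ℕ) (N : ℕ) (h : ∀ k, k + 1 < N → M k < M (k + 1)) :
    ∀ l k, k ≤ l → l < N → M k + (l - k) ≤ M l := by
  intro l
  induction l with
  | zero =>
    intro k h1 _
    have hk0 : k = 0 := by omega
    subst hk0
    omega
  | succ l ih =>
    intro k h1 h2
    rcases le_or_gt k l with h' | h'
    · have := ih k h' (by omega)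
      have := h l h2
      omega
    · have : k = l + 1 := by omega
      subst this; simp

/-- The forward map: merged enumeration as a map `Fin (2d) → Fin (n+d)`. -/
def Hfun (n d : ℕ) (p : (Fin d → Fin (n + 1)) × (Fin d → Fin (n + 1))) (k : Fin (2 * d)) :
    Fin (n + d) :=
  ⟨mval n d p k, mval_lt p k k.isLt⟩

lemma mval_succ (p : (Fin d → Fin (n + 1)) × (Fin d → Fin (n + 1)))
    (h3 : ∀ a : Fin d, 1 ≤ (p.1 a : ℕ))
    (h5 : ∀ a : Fin d, (p.1 a : ℕ) ≤ (p.2 a : ℕ))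
    (h6 : ∀ a b : Fin d, (b : ℕ) = (a : ℕ) + 1 → (p.2 a : ℕ) < (p.1 b : ℕ)) :
    ∀ k, k + 1 < 2 * d → mval n d p k < mval n d p (k + 1) := by
  intro k hk
  obtain ⟨a, rfl | rfl⟩ := kcases (show k < 2 * d by omega)
  · rw [mval_even, mval_odd]
    have := h3 a; have := h5 a; omega
  · have ha1 : (a : ℕ) + 1 < d := by omega
    have he : 2 * (a : ℕ) + 1 + 1 = 2 * ((⟨(a : ℕ) + 1, ha1⟩ : Fin d) : ℕ) := by
      show _ = 2 * ((a : ℕ) + 1); ring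
    rw [he, mval_odd, mval_even]
    have := h6 a ⟨(a : ℕ) + 1, ha1⟩ rfl
    have := h3 (⟨(a : ℕ) + 1, ha1⟩ : Fin d)
    omega

lemma mval_mono (p : (Fin d → Fin (n + 1)) × (Fin d → Fin (n + 1)))
    (h3 : ∀ a : Fin d, 1 ≤ (p.1 a : ℕ))
    (h5 : ∀ a : Fin d, (p.1 a : ℕ) ≤ (p.2 a : ℕ))
    (h6 : ∀ a b : Fin d, (b : ℕ) = (a : ℕ) + 1 → (p.2 a : ℕ) < (p.1 b : ℕ)) :
    ∀ k l, k < l → l < 2 * d → mval n d p k < mval n d p l := by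
  intro k l hkl hl
  have := gap (mval n d p) (2 * d) (mval_succ p h3 h5 h6) l k (by omega) hl
  omega

end IPaux

open IPaux in
/-- For `n ≥ d ≥ 0`, the number of interleaving pairs of `d`-element subsets of `{1,…,n}`
equals `(n+d).choose (2d)`. -/
theorem card_interleavingPairs (n d : ℕ) (hdn : d ≤ n) :
    (interleavingPairs n d).card = (n + d).choose (2 * d) := by
  have key : (interleavingPairs n d).card
      = (Finset.powersetCard (2 * d) (Finset.univ : Finset (Fin (n + d)))).card := by
    apply Finset.card_bij (fun p _ => Finset.univ.image (Hfun n d p))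
    · -- membership
      intro p hp
      simp only [interleavingPairs, Finset.mem_filter, Finset.mem_univ, true_and] at hp
      obtain ⟨h1, h2, h3, h4, h5, h6⟩ := hp
      have hmono := mval_mono p h3 h5 h6
      have hinj : Function.Injective (Hfun n d p) := by
        intro a b hab
        have hv : mval n d p a = mval n d p b := congrArg Fin.val hab
        by_contra hne
        rcases Nat.lt_trichotomy (a : ℕ) (b : ℕ) with h' | h' | h'
        · have := hmono a b h' b.isLt; omega
        · exact hne (Fin.ext h')
        · have := hmono b a h' a.isLt; omega
      rw [Finset.mem_powersetCard_univ, Finset.card_image_of_injective _ hinj,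
        Finset.card_univ, Fintype.card_fin]
    · -- injectivity
      intro p hp q hq himg
      simp only [interleavingPairs, Finset.mem_filter, Finset.mem_univ, true_and] at hp hq
      obtain ⟨p1, p2, p3, p4, p5, p6⟩ := hp
      obtain ⟨q1, q2, q3, q4, q5, q6⟩ := hq
      have hmonoP : StrictMono (Hfun n d p) := by
        intro a b hab
        exact mval_mono p p3 p5 p6 a b hab b.isLt
      have hmonoQ : StrictMono (Hfun n d q) := by
        intro a b hab
        exact mval_mono q q3 q5 q6 a b hab b.isLt
      have cardeq : (Finset.univ.image (Hfun n d p)).card = 2 * d := by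
        rw [Finset.card_image_of_injective _ hmonoP.injective, Finset.card_univ,
          Fintype.card_fin]
      have hPu := Finset.orderEmbOfFin_unique cardeq
        (fun x => Finset.mem_image_of_mem _ (Finset.mem_univ x)) hmonoP
      have hQu := Finset.orderEmbOfFin_unique cardeq
        (f := Hfun n d q)
        (fun x => by rw [himg]; exact Finset.mem_image_of_mem _ (Finset.mem_univ x)) hmonoQ
      have hPQ : ∀ k : Fin (2 * d), Hfun n d p k = Hfun n d q k :=
        fun k => (congrFun hPu k).trans (congrFun hQu k).symm
      have hval : ∀ k : ℕ, k < 2 * d → mval n d p k = mval n d q k := by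
        intro k hk
        exact congrArg Fin.val (hPQ ⟨k, hk⟩)
      have hP1 : p.1 = q.1 := by
        funext a
        have h := hval (2 * a) (by have := a.isLt; omega)
        rw [mval_even, mval_even] at h
        have := p3 a; have := q3 a
        exact Fin.ext (by omega)
      have hP2 : p.2 = q.2 := by
        funext a
        have h := hval (2 * a + 1) (by have := a.isLt; omega)
        rw [mval_odd, mval_odd] at h
        exact Fin.ext (by omega)
      exact Prod.ext hP1 hP2
    · -- surjectivity
      intro s hs
      rw [Finset.mem_powersetCard_univ] at hs
      set E : ℕ → ℕ := fun k => if h : k < 2 * d then (s.orderEmbOfFin hs ⟨k, h⟩ : ℕ) else 0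
        with hE
      have hEdef : ∀ k (hk : k < 2 * d), E k = (s.orderEmbOfFin hs ⟨k, hk⟩ : ℕ) := by
        intro k hk; simp only [hE, dif_pos hk]
      have econs : ∀ k, k + 1 < 2 * d → E k < E (k + 1) := by
        intro k hk
        rw [hEdef k (by omega), hEdef (k + 1) hk]
        exact Fin.lt_def.mp ((s.orderEmbOfFin hs).strictMono (by simp [Fin.lt_def]))
      have egap := gap E (2 * d) econs
      have eub : ∀ k, k < 2 * d → E k < n + d := by
        intro k hk; rw [hEdef k hk]; exact (s.orderEmbOfFin hs ⟨k, hk⟩).isLt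
      have elb : ∀ k, k < 2 * d → k ≤ E k := by
        intro k hk; have := egap k 0 (by omega) hk; omega
      have eub2 : ∀ k, k < 2 * d → E k + (2 * d - 1 - k) ≤ n + d - 1 := by
        intro k hk
        have h1 := egap (2 * d - 1) k (by omega) (by omega)
        have h2 := eub (2 * d - 1) (by omega)
        omega
      have hfb : ∀ a : Fin d, E (2 * (a : ℕ)) + 1 - a < n + 1 := by
        intro a
        have h1 := eub2 (2 * a) (by have := a.isLt; omega)
        have h2 := elb (2 * a) (by have := a.isLt; omega)
        have := a.isLt
        omega
      have hgb : ∀ a : Fin d, E (2 * (a : ℕ) + 1) - a < n + 1 := by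
        intro a
        have h1 := eub2 (2 * a + 1) (by have := a.isLt; omega)
        have h2 := elb (2 * a + 1) (by have := a.isLt; omega)
        have := a.isLt
        omega
      refine ⟨(fun a => ⟨E (2 * (a : ℕ)) + 1 - a, hfb a⟩,
               fun a => ⟨E (2 * (a : ℕ) + 1) - a, hgb a⟩), ?_, ?_⟩
      · -- membership in interleavingPairs
        simp only [interleavingPairs, Finset.mem_filter, Finset.mem_univ, true_and]
        refine ⟨?_, ?_, ?_, ?_, ?_, ?_⟩
        · intro a b hab
          have hab' : (a : ℕ) < b := hab
          simp only [Fin.mk_lt_mk]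
          have h1 := egap (2 * b) (2 * a) (by omega) (by have := b.isLt; omega)
          have h2 := elb (2 * a) (by have := b.isLt; omega)
          omega
        · intro a b hab
          have hab' : (a : ℕ) < b := hab
          simp only [Fin.mk_lt_mk]
          have h1 := egap (2 * b + 1) (2 * a + 1) (by omega) (by have := b.isLt; omega)
          have h2 := elb (2 * a + 1) (by have := b.isLt; omega)
          omega
        · intro a
          have h2 := elb (2 * a) (by have := a.isLt; omega)
          show 1 ≤ E (2 * (a : ℕ)) + 1 - a
          omega
        · intro a
          have h2 := elb (2 * a + 1) (by have := a.isLt; omega)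
          show 1 ≤ E (2 * (a : ℕ) + 1) - a
          omega
        · intro a
          have h1 := econs (2 * a) (by have := a.isLt; omega)
          have h2 := elb (2 * a) (by have := a.isLt; omega)
          show E (2 * (a : ℕ)) + 1 - a ≤ E (2 * (a : ℕ) + 1) - a
          omega
        · intro a b hb
          show E (2 * (a : ℕ) + 1) - a < E (2 * (b : ℕ)) + 1 - b
          have hlt := b.isLt
          have h1 := econs (2 * a + 1) (by omega)
          have h2 := elb (2 * a + 1) (by omega)
          have he : 2 * (b : ℕ) = 2 * (a : ℕ) + 1 + 1 := by omega
          rw [he]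
          omega
      · -- image equality
        have hH : Hfun n d (fun a => (⟨E (2 * (a : ℕ)) + 1 - a, hfb a⟩ : Fin (n+1)),
            fun a => (⟨E (2 * (a : ℕ) + 1) - a, hgb a⟩ : Fin (n+1)))
            = ⇑(s.orderEmbOfFin hs) := by
          funext k
          apply Fin.ext
          show mval n d _ (k : ℕ) = _
          obtain ⟨a, h | h⟩ := kcases k.isLt
          · rw [h, mval_even]
            show E (2 * (a : ℕ)) + 1 - a + a - 1 = _
            have h2 := elb (2 * a) (by have := a.isLt; omega)
            rw [← hEdef (k : ℕ) k.isLt, h]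
            omega
          · rw [h, mval_odd]
            show E (2 * (a : ℕ) + 1) - a + a = _
            have h2 := elb (2 * a + 1) (by have := a.isLt; omega)
            rw [← hEdef (k : ℕ) k.isLt, h]
            omega
        rw [hH]
        apply Finset.coe_injective
        rw [Finset.coe_image, Finset.coe_univ, Set.image_univ, Finset.range_orderEmbOfFin]
  rw [key, Finset.card_powersetCard, Finset.card_univ, Fintype.card_fin]
end

section
/- Let $I, J$ be $d$-element subsets of $\{1,\dots,n\}$ with increasing enumerations satisfying $i_a \leq j_a$ for all $a$. The maximum element $\pi_0^{JI}$ of the set $X_{JI} = \{\pi \in S_d : \forall a,\ i_a \leq j_{\pi(a)}\}$ in the Bruhat order is the identity permutation if and only if $j_a < i_{a+1}$ for all $1 \leq a < d$. -/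
lemma inversions_mono {d : ℕ} {π' π : Equiv.Perm (Fin d)} (h : BruhatLE π' π) :
    inversions π' ≤ inversions π := by
  induction h with
  | refl => exact le_refl _
  | tail _ hcov ih =>
    obtain ⟨-, heq⟩ := hcov
    omega

lemma perm_eq_one_of_le_apply {d : ℕ} (π : Equiv.Perm (Fin d))
    (h : ∀ a : Fin d, (a : ℕ) ≤ (π a : ℕ)) : π = 1 := by
  have hsum : (∑ a : Fin d, ((π a : ℕ))) = ∑ a : Fin d, (a : ℕ) :=
    Equiv.sum_comp π (fun a => (a : ℕ))
  have := (Finset.sum_eq_sum_iff_of_le (fun a _ => h a)).mp hsum.symm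
  ext a
  exact ((this a (Finset.mem_univ a)).symm : ((π a : ℕ) = a))

lemma strictMono_of_inversions_eq_zero {d : ℕ} (π : Equiv.Perm (Fin d))
    (h : inversions π = 0) : StrictMono π := by
  intro a b hab
  by_contra hc
  push_neg at hc
  have hne : π b ≠ π a := fun he => absurd (π.injective he) (ne_of_gt hab)
  have hlt : π b < π a := lt_of_le_of_ne hc hne
  have hmem : (a, b) ∈ Finset.univ.filter
      fun p : Fin d × Fin d => p.1 < p.2 ∧ π p.2 < π p.1 := by
    simp [hab, hlt]
  have hpos := Finset.card_pos.mpr ⟨_, hmem⟩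
  unfold inversions at h
  omega

/-- For `I ≤ J` componentwise, the Bruhat-maximum `π₀` of
`X_{JI} = {π : ∀ a, i_a ≤ j_{π(a)}}` is the identity permutation if and only if
`j_a < i_{a+1}` for all `1 ≤ a < d`. -/
theorem bruhat_max_eq_one_iff (d n : ℕ) (i j : Fin d → ℕ)
    (hi : StrictMono i) (hj : StrictMono j)
    (hi' : ∀ a, i a ∈ Finset.Icc 1 n) (hj' : ∀ a, j a ∈ Finset.Icc 1 n)
    (hIJ : ∀ a, i a ≤ j a)
    (π₀ : Equiv.Perm (Fin d)) (hmem : ∀ a, i a ≤ j (π₀ a))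
    (hmax : ∀ π : Equiv.Perm (Fin d), (∀ a, i a ≤ j (π a)) → BruhatLE π π₀) :
    π₀ = 1 ↔ ∀ (a : ℕ) (h : a + 1 < d), j ⟨a, Nat.lt_of_succ_lt h⟩ < i ⟨a + 1, h⟩ := by
  constructor
  · intro h1 a hlt
    by_contra hc
    push_neg at hc
    -- hc : i ⟨a+1⟩ ≤ j ⟨a⟩
    set x : Fin d := ⟨a, Nat.lt_of_succ_lt hlt⟩
    set y : Fin d := ⟨a + 1, hlt⟩
    have hxy : x ≠ y := by simp [x, y, Fin.ext_iff]
    have hπ : ∀ b, i b ≤ j (Equiv.swap x y b) := by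
      intro b
      rcases eq_or_ne b x with hbx | hbx
      · rw [hbx, Equiv.swap_apply_left]
        exact le_trans (hIJ x) (le_of_lt (hj (by simp [x, y, Fin.lt_iff_val_lt_val])))
      · rcases eq_or_ne b y with hby | hby
        · rw [hby, Equiv.swap_apply_right]
          exact hc
        · rw [Equiv.swap_apply_of_ne_of_ne hbx hby]
          exact hIJ b
    have hle := hmax (Equiv.swap x y) hπ
    rw [h1] at hle
    have hinv : inversions (Equiv.swap x y) ≤ inversions (1 : Equiv.Perm (Fin d)) :=
      inversions_mono hle
    have h0 : inversions (1 : Equiv.Perm (Fin d)) = 0 := by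
      unfold inversions
      rw [Finset.card_eq_zero, Finset.filter_eq_empty_iff]
      rintro p -
      rintro ⟨h1, h2⟩
      simp only [Equiv.Perm.one_apply] at h2
      exact absurd h2 (not_lt_of_gt h1)
    have hsm := strictMono_of_inversions_eq_zero (Equiv.swap x y) (by omega)
    have : Equiv.swap x y x < Equiv.swap x y y := hsm (by simp [x, y, Fin.lt_iff_val_lt_val])
    rw [Equiv.swap_apply_left, Equiv.swap_apply_right] at this
    exact absurd this (not_lt_of_gt (by simp [x, y, Fin.lt_iff_val_lt_val]))
  · intro hgap
    apply perm_eq_one_of_le_apply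
    intro a
    by_contra hc
    push_neg at hc
    -- hc : (π₀ a : ℕ) < a
    have ha1 : 1 ≤ (a : ℕ) := Nat.one_le_iff_ne_zero.mpr (by omega)
    have hlt : ((a : ℕ) - 1) + 1 < d := by have := a.isLt; omega
    have hchain : j (π₀ a) ≤ j ⟨(a : ℕ) - 1, Nat.lt_of_succ_lt hlt⟩ :=
      hj.monotone (by rw [Fin.le_def]; simp only []; omega)
    have hgap' := hgap ((a : ℕ) - 1) hlt
    have hia : i ⟨(a : ℕ) - 1 + 1, hlt⟩ = i a :=
      congrArg i (Fin.ext (by simp; omega))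
    rw [hia] at hgap'
    exact absurd (hmem a) (not_le_of_gt (lt_of_le_of_lt hchain hgap'))
end
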